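/- Let R be a commutative ring with identity, let A = (a_{ij}) be an n×n matrix over R, and let k, m₁,…,m_n be nonnegative integers with m₁ < m₂ < ⋯ < m_n ≤ k. Then the coefficient of x₁^k⋯x_n^k in per((a_{ij} x_j^{m_i})) · ∏_{1≤i<j≤n}(x_j − x_i) · (x₁+⋯+x_n)^{kn − C(n,2) − ∑ m_i} equals (−1)^{C(n,2)} · (kn − C(n,2) − ∑_{i=1}^n m_i)! / ∏_{i=1}^n ∏_{j} (j − m_i) times det(A), where the inner product is over m_i < j ≤ k with j ∉ {m_s : i < s ≤ n}. -/

import Mathlib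

open MvPolynomial Finset

/-- The permanent of a square matrix. -/
def perMatrix {n : ℕ} {S : Type*} [CommRing S] (M : Matrix (Fin n) (Fin n) S) : S :=
  ∑ σ : Equiv.Perm (Fin n), ∏ i, M i (σ i)

section helpers

lemma prod_X_pow_eq (n : ℕ) {R : Type*} [CommSemiring R] (g : Fin n → ℕ) :
    (∏ j : Fin n, (X j : MvPolynomial (Fin n) R) ^ g j)
      = monomial (Finsupp.equivFunOnFinite.symm g) 1 := by
  rw [← prod_X_pow_eq_monomial]
  have h2 : ∏ x ∈ (Finsupp.equivFunOnFinite.symm g : Fin n →₀ ℕ).support,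
      (X x : MvPolynomial (Fin n) R) ^ (Finsupp.equivFunOnFinite.symm g) x
      = ∏ x : Fin n, (X x : MvPolynomial (Fin n) R) ^ (Finsupp.equivFunOnFinite.symm g) x := by
    refine Finset.prod_subset (Finset.subset_univ _) ?_
    intro x _ hx
    rw [Finsupp.notMem_support_iff] at hx
    rw [hx, pow_zero]
  rw [h2]
  rfl

lemma coeff_sum_X_pow (n : ℕ) {R : Type*} [CommSemiring R] (N : ℕ) (c : Fin n → ℕ) :
    coeff (Finsupp.equivFunOnFinite.symm c) ((∑ s : Fin n, (X s : MvPolynomial (Fin n) R)) ^ N)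
      = if (∑ i, c i) = N then (Nat.multinomial Finset.univ c : R) else 0 := by
  rw [Finset.sum_pow_eq_sum_piAntidiag, MvPolynomial.coeff_sum]
  have key : ∀ d ∈ Finset.piAntidiag Finset.univ N,
      coeff (Finsupp.equivFunOnFinite.symm c)
        ((Nat.multinomial Finset.univ d : MvPolynomial (Fin n) R) * ∏ i, X i ^ d i)
      = if d = c then (Nat.multinomial Finset.univ d : R) else 0 := by
    intro d _
    rw [prod_X_pow_eq, ← MvPolynomial.C_eq_coe_nat, MvPolynomial.C_mul_monomial,
      MvPolynomial.coeff_monomial, mul_one]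
    congr 1
    rw [eq_iff_iff, EmbeddingLike.apply_eq_iff_eq]
  rw [Finset.sum_congr rfl key]
  by_cases hc : (∑ i, c i) = N
  · rw [Finset.sum_ite_eq' (Finset.piAntidiag Finset.univ N) c
      (fun d => (Nat.multinomial Finset.univ d : R)), if_pos hc, if_pos]
    simp [hc]
  · rw [if_neg hc, Finset.sum_eq_zero]
    intro d hd
    rw [if_neg]
    rintro rfl
    rw [Finset.mem_piAntidiag] at hd
    exact hc hd.1

lemma prod_Ioc_sub (a k : ℕ) : ∏ j ∈ Finset.Ioc a k, (j - a) = (k - a).factorial := by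
  induction k with
  | zero => simp
  | succ k ih =>
    by_cases h : a ≤ k
    · rw [Finset.prod_Ioc_succ_top h, ih,
        show k + 1 - a = (k - a) + 1 by omega, Nat.factorial_succ, mul_comm]
    · rw [show k + 1 - a = 0 by omega, Nat.factorial_zero, Finset.Ioc_eq_empty (by omega),
        Finset.prod_empty]

lemma step_fact {n k : ℕ} (m : Fin n → ℕ) (hmono : StrictMono m) (hk : ∀ i, m i ≤ k) (i : Fin n) :
    (∏ j ∈ (Finset.Ioc (m i) k).filter (fun j => ∀ s : Fin n, i < s → j ≠ m s), (j - m i)) *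
      (∏ s ∈ Finset.Ioi i, (m s - m i)) = (k - m i).factorial := by
  have himg : (Finset.Ioc (m i) k).filter (fun j => ¬ ∀ s : Fin n, i < s → j ≠ m s)
      = (Finset.Ioi i).image m := by
    ext j
    simp only [Finset.mem_filter, Finset.mem_Ioc, Finset.mem_image, Finset.mem_Ioi, not_forall]
    constructor
    · rintro ⟨-, s, hs, hj⟩
      push_neg at hj
      exact ⟨s, hs, hj.symm⟩
    · rintro ⟨s, hs, rfl⟩
      exact ⟨⟨hmono hs, hk s⟩, s, hs, fun h => h rfl⟩
  have h2 : ∏ j ∈ (Finset.Ioi i).image m, (j - m i) = ∏ s ∈ Finset.Ioi i, (m s - m i) :=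
    Finset.prod_image (fun a _ b _ h => hmono.injective h)
  rw [← h2, ← himg, Finset.prod_filter_mul_prod_filter_not, prod_Ioc_sub]

lemma sum_card_Ioi (n : ℕ) : ∑ i : Fin n, (Finset.Ioi i).card = n.choose 2 := by
  simp only [Fin.card_Ioi]
  rw [Fin.sum_univ_eq_sum_range (fun i => n - 1 - i), ← Finset.sum_range_reflect]
  rw [Nat.choose_two_right, ← Finset.sum_range_id]
  exact Finset.sum_congr rfl fun j hj => by rw [Finset.mem_range] at hj; omega

lemma det_desc {n k : ℕ} (m : Fin n → ℕ) (hmono : StrictMono m) (hk : ∀ i, m i ≤ k) :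
    (Matrix.of fun i j : Fin n => (((k - m i).descFactorial (j : ℕ) : ℤ))).det
      = (-1) ^ n.choose 2 * (∏ i : Fin n, ∏ j ∈ Finset.Ioi i, (m j - m i) : ℕ) := by
  have hinj : Function.Injective ((Int.cast : ℤ → ℚ)) := Int.cast_injective
  apply hinj
  rw [show ((Matrix.of fun i j : Fin n => (((k - m i).descFactorial (j : ℕ) : ℤ))).det : ℚ)
      = (Int.castRingHom ℚ) (Matrix.of fun i j : Fin n =>
        (((k - m i).descFactorial (j : ℕ) : ℤ))).det from rfl,
    RingHom.map_det (Int.castRingHom ℚ), RingHom.mapMatrix_apply]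
  have hmat : (Matrix.of fun i j : Fin n => (((k - m i).descFactorial (j : ℕ) : ℤ))).map
      (Int.castRingHom ℚ)
      = Matrix.of (fun i j : Fin n => (descPochhammer ℚ (j : ℕ)).eval (((k - m i : ℕ)) : ℚ)) := by
    ext i j
    simp [Matrix.map_apply, descPochhammer_eval_eq_descFactorial]
  rw [hmat, ← Matrix.det_eval_matrixOfPolynomials_eq_det_vandermonde
    (fun i : Fin n => ((k - m i : ℕ) : ℚ)) (fun j => descPochhammer ℚ (j : ℕ))
    (fun j => descPochhammer_natDegree ℚ (j : ℕ)) (fun j => monic_descPochhammer ℚ (j : ℕ)),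
    Matrix.det_vandermonde]
  have hfac : ∀ i : Fin n, ∀ j ∈ Finset.Ioi i,
      ((k - m j : ℕ) : ℚ) - ((k - m i : ℕ) : ℚ) = -1 * ((m j - m i : ℕ) : ℚ) := by
    intro i j hj
    rw [Finset.mem_Ioi] at hj
    have h1 := hk i
    have h2 := hk j
    have h3 : m i ≤ m j := (hmono hj).le
    push_cast [Nat.cast_sub h1, Nat.cast_sub h2, Nat.cast_sub h3]
    ring
  calc ∏ i : Fin n, ∏ j ∈ Finset.Ioi i, (((k - m j : ℕ) : ℚ) - ((k - m i : ℕ) : ℚ))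
      = ∏ i : Fin n, ((-1) ^ (Finset.Ioi i).card * ∏ j ∈ Finset.Ioi i, ((m j - m i : ℕ) : ℚ)) := by
        refine Finset.prod_congr rfl fun i _ => ?_
        rw [Finset.prod_congr rfl (hfac i), Finset.prod_mul_distrib, Finset.prod_const]
    _ = (-1) ^ n.choose 2 * ∏ i : Fin n, ∏ j ∈ Finset.Ioi i, ((m j - m i : ℕ) : ℚ) := by
        rw [Finset.prod_mul_distrib, Finset.prod_pow_eq_pow_sum, sum_card_Ioi]
    _ = ((-1) ^ n.choose 2 * (∏ i : Fin n, ∏ j ∈ Finset.Ioi i, (m j - m i) : ℕ) : ℤ) := by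
        push_cast
        ring

lemma sum_perm_fin {n : ℕ} (ρ : Equiv.Perm (Fin n)) : ∑ i : Fin n, (ρ i : ℕ) = n.choose 2 := by
  rw [Equiv.sum_comp ρ (fun i : Fin n => (i : ℕ)), Fin.sum_univ_eq_sum_range (fun i => i),
    Finset.sum_range_id, Nat.choose_two_right]

lemma term_claim {n k : ℕ} (m : Fin n → ℕ) (hk : ∀ i, m i ≤ k)
    (ρ : Equiv.Perm (Fin n)) :
    (if ∀ i, m i + (ρ i : ℕ) ≤ k then
        Nat.multinomial Finset.univ (fun i => k - m i - (ρ i : ℕ)) else 0) *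
      ∏ i, (k - m i).factorial
    = (k * n - n.choose 2 - ∑ i, m i).factorial *
        ∏ i : Fin n, (k - m i).descFactorial ((ρ i : ℕ)) := by
  by_cases hcond : ∀ i, m i + (ρ i : ℕ) ≤ k
  · rw [if_pos hcond]
    have hρb : ∀ i : Fin n, (ρ i : ℕ) ≤ k - m i := fun i => by have := hcond i; omega
    have hsum : ∑ i : Fin n, (k - m i - (ρ i : ℕ)) = k * n - n.choose 2 - ∑ i, m i := by
      rw [Finset.sum_tsub_distrib _ (fun i _ => hρb i),
        Finset.sum_tsub_distrib _ (fun i _ => hk i), sum_perm_fin,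
        Finset.sum_const, Finset.card_univ, Fintype.card_fin, smul_eq_mul, mul_comm n k]
      omega
    have hfac : ∀ i : Fin n, (k - m i).factorial
        = (k - m i - (ρ i : ℕ)).factorial * (k - m i).descFactorial ((ρ i : ℕ)) :=
      fun i => (Nat.factorial_mul_descFactorial (hρb i)).symm
    calc Nat.multinomial Finset.univ (fun i => k - m i - (ρ i : ℕ)) * ∏ i, (k - m i).factorial
        = Nat.multinomial Finset.univ (fun i => k - m i - (ρ i : ℕ)) *
            ((∏ i : Fin n, (k - m i - (ρ i : ℕ)).factorial) *
              ∏ i : Fin n, (k - m i).descFactorial ((ρ i : ℕ))) := by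
          rw [← Finset.prod_mul_distrib]
          exact congrArg _ (Finset.prod_congr rfl fun i _ => hfac i)
      _ = (k * n - n.choose 2 - ∑ i, m i).factorial *
            ∏ i : Fin n, (k - m i).descFactorial ((ρ i : ℕ)) := by
          rw [← mul_assoc, mul_comm (Nat.multinomial _ _), Nat.multinomial_spec, hsum]
  · rw [if_neg hcond, zero_mul]
    push_neg at hcond
    obtain ⟨i, hi⟩ := hcond
    have : (k - m i).descFactorial ((ρ i : ℕ)) = 0 :=
      Nat.descFactorial_eq_zero_iff_lt.mpr (by have := hk i; omega)
    rw [Finset.prod_eq_zero (Finset.mem_univ i) this, mul_zero]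

lemma D_mul_eq {n k : ℕ} (m : Fin n → ℕ) (hmono : StrictMono m) (hk : ∀ i, m i ≤ k) :
    (∑ ρ : Equiv.Perm (Fin n), (Equiv.Perm.sign ρ : ℤ) *
      (if ∀ i, m i + (ρ i : ℕ) ≤ k then
        (Nat.multinomial Finset.univ (fun i => k - m i - (ρ i : ℕ)) : ℤ) else 0))
      * ((∏ i, (k - m i).factorial : ℕ) : ℤ)
    = (-1) ^ n.choose 2 * ((k * n - n.choose 2 - ∑ i, m i).factorial : ℤ) *
        ((∏ i : Fin n, ∏ j ∈ Finset.Ioi i, (m j - m i) : ℕ) : ℤ) := by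
  rw [Finset.sum_mul]
  have key : ∀ ρ : Equiv.Perm (Fin n),
      (Equiv.Perm.sign ρ : ℤ) * (if ∀ i, m i + (ρ i : ℕ) ≤ k then
          (Nat.multinomial Finset.univ (fun i => k - m i - (ρ i : ℕ)) : ℤ) else 0)
        * ((∏ i, (k - m i).factorial : ℕ) : ℤ)
      = ((k * n - n.choose 2 - ∑ i, m i).factorial : ℤ) *
          ((Equiv.Perm.sign ρ : ℤ) *
            ∏ i : Fin n, ((k - m i).descFactorial ((ρ i : ℕ)) : ℤ)) := by
    intro ρ
    have h := congrArg (fun t : ℕ => (t : ℤ)) (term_claim m hk ρ)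
    push_cast at h
    rw [mul_assoc, Nat.cast_prod, h]
    ring
  rw [Finset.sum_congr rfl (fun ρ _ => key ρ), ← Finset.mul_sum]
  have hdet : ∑ ρ : Equiv.Perm (Fin n), (Equiv.Perm.sign ρ : ℤ) *
        ∏ i : Fin n, ((k - m i).descFactorial ((ρ i : ℕ)) : ℤ)
      = (Matrix.of fun i j : Fin n => (((k - m i).descFactorial (j : ℕ) : ℤ))).det := by
    rw [← Matrix.det_transpose, Matrix.det_apply']
    refine Finset.sum_congr rfl fun ρ _ => ?_
    simp [Matrix.transpose_apply]
  rw [hdet, det_desc m hmono hk]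
  ring

lemma fin_le_strictMono {n : ℕ} {g : Fin n → ℕ} (hg : StrictMono g) (j : Fin n) :
    (j : ℕ) ≤ g j := by
  obtain ⟨v, hv⟩ : ∃ v, (j : ℕ) = v := ⟨_, rfl⟩
  induction v generalizing j with
  | zero => omega
  | succ v ih =>
    have hvn : v < n := by omega
    have hlt : (⟨v, hvn⟩ : Fin n) < j := by
      rw [Fin.lt_def]
      show v < (j : ℕ)
      omega
    have h1 := ih ⟨v, hvn⟩ rfl
    have h2 := hg hlt
    have h3 : ((⟨v, hvn⟩ : Fin n) : ℕ) = v := rfl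
    omega

lemma sum_m_bound {n k : ℕ} {m : Fin n → ℕ} (hmono : StrictMono m) (hk : ∀ i, m i ≤ k) :
    (∑ i, m i) + n.choose 2 ≤ k * n := by
  have hrev : StrictMono (fun j : Fin n => k - m (Fin.rev j)) := by
    intro a b hab
    have h1 : Fin.rev b < Fin.rev a := by
      rw [Fin.lt_def] at hab ⊢
      simp [Fin.val_rev]
      omega
    have h2 := hmono h1
    have h3 := hk (Fin.rev a)
    show k - m (Fin.rev a) < k - m (Fin.rev b)
    omega
  have hper : ∀ i : Fin n, m i + ((n - 1) - (i : ℕ)) ≤ k := by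
    intro i
    have := fin_le_strictMono hrev (Fin.rev i)
    rw [Fin.rev_rev] at this
    simp [Fin.val_rev] at this
    have := hk i
    omega
  have hsum := Finset.sum_le_sum (fun i (_ : i ∈ Finset.univ) => hper i)
  rw [Finset.sum_add_distrib, Finset.sum_const, Finset.card_univ, Fintype.card_fin,
    smul_eq_mul, mul_comm] at hsum
  have hc2 : ∑ i : Fin n, ((n - 1) - (i : ℕ)) = n.choose 2 := by
    rw [Fin.sum_univ_eq_sum_range (fun i => (n-1) - i), ← Finset.sum_range_reflect,
      Nat.choose_two_right, ← Finset.sum_range_id]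
    exact Finset.sum_congr rfl fun j hj => by rw [Finset.mem_range] at hj; omega
  omega

lemma multinomial_comp_equiv {n : ℕ} (e : Equiv.Perm (Fin n)) (f : Fin n → ℕ) :
    Nat.multinomial Finset.univ (fun i => f (e i)) = Nat.multinomial Finset.univ f := by
  unfold Nat.multinomial
  rw [Equiv.sum_comp e f, Equiv.prod_comp e (fun i => (f i).factorial)]

end helpers

/-- Theorem 3.2(ii), equation (3.4). -/
theorem stmt14 {R : Type*} [CommRing R] (n k : ℕ)
    (A : Matrix (Fin n) (Fin n) R) (m : Fin n → ℕ)
    (hmono : StrictMono m) (hk : ∀ i, m i ≤ k) :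
    MvPolynomial.coeff (Finsupp.equivFunOnFinite.symm fun _ : Fin n => k)
      (perMatrix (Matrix.of fun i j : Fin n => (C (A i j) * X j ^ m i :
          MvPolynomial (Fin n) R)) *
        (∏ i : Fin n, ∏ j ∈ Finset.Ioi i, (X j - X i)) *
        (∑ s : Fin n, X s) ^ (k * n - n.choose 2 - ∑ i, m i))
      = ((-1 : ℤ) ^ n.choose 2 *
          ((k * n - n.choose 2 - ∑ i, m i).factorial /
            ∏ i : Fin n, ∏ j ∈ (Finset.Ioc (m i) k).filter
              (fun j => ∀ s : Fin n, i < s → j ≠ m s), (j - m i) : ℕ)) • A.det := by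
  classical
  set N := k * n - n.choose 2 - ∑ i, m i with hN
  set c : Fin n →₀ ℕ := Finsupp.equivFunOnFinite.symm (fun _ : Fin n => k) with hc
  set E : Equiv.Perm (Fin n) → (Fin n →₀ ℕ) :=
    fun σ => Finsupp.equivFunOnFinite.symm (fun j => m (σ.symm j)) with hE
  set F : Equiv.Perm (Fin n) → (Fin n →₀ ℕ) :=
    fun τ => Finsupp.equivFunOnFinite.symm (fun j => ((τ.symm j : Fin n) : ℕ)) with hF
  set u : Equiv.Perm (Fin n) → ℕ := fun ρ =>
    if ∀ i, m i + (ρ i : ℕ) ≤ k then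
      Nat.multinomial Finset.univ (fun i => k - m i - (ρ i : ℕ)) else 0 with hu
  set D : ℤ := ∑ ρ : Equiv.Perm (Fin n), (Equiv.Perm.sign ρ : ℤ) * (u ρ : ℤ) with hD
  set P : ℕ := ∏ i : Fin n, ∏ j ∈ (Finset.Ioc (m i) k).filter
      (fun j => ∀ s : Fin n, i < s → j ≠ m s), (j - m i) with hP
  set Δ : ℕ := ∏ i : Fin n, ∏ j ∈ Finset.Ioi i, (m j - m i) with hΔ
  -- Step 1 : expand permanent and Vandermonde product
  have hper : perMatrix (Matrix.of fun i j : Fin n => (C (A i j) * X j ^ m i :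
      MvPolynomial (Fin n) R))
      = ∑ σ : Equiv.Perm (Fin n), C (∏ i, A i (σ i)) * monomial (E σ) 1 := by
    unfold perMatrix
    refine Finset.sum_congr rfl fun σ _ => ?_
    simp only [Matrix.of_apply]
    rw [Finset.prod_mul_distrib, ← map_prod]
    congr 1
    calc ∏ i : Fin n, (X (σ i) : MvPolynomial (Fin n) R) ^ m i
        = ∏ i : Fin n, (fun j => (X j : MvPolynomial (Fin n) R) ^ m (σ.symm j)) (σ i) :=
          Finset.prod_congr rfl fun i _ => by simp
      _ = ∏ j : Fin n, (X j : MvPolynomial (Fin n) R) ^ m (σ.symm j) :=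
          Equiv.prod_comp σ (fun j => (X j : MvPolynomial (Fin n) R) ^ m (σ.symm j))
      _ = monomial (E σ) 1 := prod_X_pow_eq _ _
  have hV : (∏ i : Fin n, ∏ j ∈ Finset.Ioi i, (X j - X i : MvPolynomial (Fin n) R))
      = ∑ τ : Equiv.Perm (Fin n), (Equiv.Perm.sign τ : ℤ) • monomial (F τ) 1 := by
    rw [← Matrix.det_vandermonde (fun i : Fin n => (X i : MvPolynomial (Fin n) R)),
      Matrix.det_apply]
    refine Finset.sum_congr rfl fun τ _ => ?_
    rw [Units.smul_def]
    congr 1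
    calc ∏ i : Fin n, Matrix.vandermonde (fun i : Fin n => (X i : MvPolynomial (Fin n) R)) (τ i) i
        = ∏ i : Fin n, (fun j => (X j : MvPolynomial (Fin n) R) ^ ((τ.symm j : Fin n) : ℕ)) (τ i) :=
          Finset.prod_congr rfl fun i _ => by simp [Matrix.vandermonde]
      _ = ∏ j : Fin n, (X j : MvPolynomial (Fin n) R) ^ ((τ.symm j : Fin n) : ℕ) :=
          Equiv.prod_comp τ (fun j => (X j : MvPolynomial (Fin n) R) ^ ((τ.symm j : Fin n) : ℕ))
      _ = monomial (F τ) 1 := prod_X_pow_eq _ _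
  rw [hper, hV, Finset.sum_mul_sum, Finset.sum_mul, MvPolynomial.coeff_sum]
  -- Step 2 : per-term coefficient
  have hterm : ∀ σ τ : Equiv.Perm (Fin n),
      coeff c ((C (∏ i, A i (σ i)) * monomial (E σ) 1) *
          ((Equiv.Perm.sign τ : ℤ) • monomial (F τ) 1) * (∑ s : Fin n, X s) ^ N)
      = (Equiv.Perm.sign τ : ℤ) •
          ((∏ i, A i (σ i)) * ((u (σ.trans τ.symm) : ℕ) : R)) := by
    intro σ τ
    set ρ := σ.trans τ.symm with hρ
    have h1 : (C (∏ i, A i (σ i)) * monomial (E σ) 1) *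
          ((Equiv.Perm.sign τ : ℤ) • monomial (F τ) 1) * (∑ s : Fin n, X s) ^ N
        = (Equiv.Perm.sign τ : ℤ) •
            (C (∏ i, A i (σ i)) * (monomial (E σ + F τ) 1 *
              (∑ s : Fin n, X s) ^ N)) := by
      rw [mul_smul_comm, smul_mul_assoc]
      congr 1
      rw [mul_assoc (C _), monomial_mul, mul_one, mul_assoc]
    rw [h1, MvPolynomial.coeff_smul, coeff_C_mul, MvPolynomial.coeff_monomial_mul']
    have hEF : E σ + F τ
        = Finsupp.equivFunOnFinite.symm (fun j => m (σ.symm j) + ((τ.symm j : Fin n) : ℕ)) := by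
      ext j
      rfl
    have happ : ∀ j, (E σ + F τ) j = m (σ.symm j) + ((τ.symm j : Fin n) : ℕ) := fun j => rfl
    have hcj : ∀ j, c j = k := fun j => rfl
    have hcond : (E σ + F τ ≤ c) ↔ ∀ i : Fin n, m i + ((ρ i : Fin n) : ℕ) ≤ k := by
      rw [Finsupp.le_def]
      constructor
      · intro h i
        have h2 := h (σ i)
        rw [happ, hcj] at h2
        simpa [hρ] using h2
      · intro h j
        have h2 := h (σ.symm j)
        rw [happ, hcj]
        simpa [hρ] using h2
    by_cases hcc : ∀ i : Fin n, m i + ((ρ i : Fin n) : ℕ) ≤ k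
    · rw [if_pos (hcond.mpr hcc), one_mul]
      have hsub : c - (E σ + F τ)
          = Finsupp.equivFunOnFinite.symm
              (fun j => k - (m (σ.symm j) + ((τ.symm j : Fin n) : ℕ))) := by
        ext j
        rfl
      rw [hsub, coeff_sum_X_pow _]
      have hgle : ∀ j : Fin n, m (σ.symm j) + ((τ.symm j : Fin n) : ℕ) ≤ k := by
        intro j
        have h2 := hcc (σ.symm j)
        simpa [hρ] using h2
      have hsum : ∑ j : Fin n, (k - (m (σ.symm j) + ((τ.symm j : Fin n) : ℕ))) = N := by
        rw [Finset.sum_tsub_distrib _ (fun j _ => hgle j), Finset.sum_add_distrib,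
          Equiv.sum_comp σ.symm m, sum_perm_fin τ.symm, Finset.sum_const,
          Finset.card_univ, Fintype.card_fin, smul_eq_mul, mul_comm n k, hN]
        have := sum_m_bound hmono hk
        omega
      rw [if_pos hsum]
      have hmult : Nat.multinomial Finset.univ
            (fun j => k - (m (σ.symm j) + ((τ.symm j : Fin n) : ℕ)))
          = u ρ := by
        rw [hu]
        simp only []
        rw [if_pos hcc]
        rw [← multinomial_comp_equiv σ
          (fun j => k - (m (σ.symm j) + ((τ.symm j : Fin n) : ℕ)))]
        congr 1
        funext i
        simp [hρ, Nat.sub_sub]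
      rw [hmult]
    · rw [if_neg (fun h => hcc (hcond.mp h))]
      have : u ρ = 0 := by rw [hu]; simp only []; rw [if_neg hcc]
      rw [this, Nat.cast_zero, mul_zero]
  rw [Finset.sum_congr rfl (fun σ (_ : σ ∈ Finset.univ) => congrArg (coeff c)
    (Finset.sum_mul (Finset.univ) _ ((∑ s : Fin n, X s) ^ N)))]
  rw [Finset.sum_congr rfl (fun σ (_ : σ ∈ Finset.univ) => MvPolynomial.coeff_sum _ _ _)]
  rw [Finset.sum_congr rfl (fun σ (_ : σ ∈ Finset.univ) =>
    Finset.sum_congr rfl (fun τ _ => hterm σ τ))]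
  -- Step 3 : reindex the inner sum over τ
  have hre : ∀ σ : Equiv.Perm (Fin n),
      (∑ τ : Equiv.Perm (Fin n), (Equiv.Perm.sign τ : ℤ) •
        ((∏ i, A i (σ i)) * ((u (σ.trans τ.symm) : ℕ) : R)))
      = (Equiv.Perm.sign σ : ℤ) • ((∏ i, A i (σ i)) *
          (∑ ρ : Equiv.Perm (Fin n), (Equiv.Perm.sign ρ : ℤ) • ((u ρ : ℕ) : R))) := by
    intro σ
    have hbij : ∀ ρ : Equiv.Perm (Fin n), σ.trans (σ * ρ⁻¹).symm = ρ := by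
      intro ρ
      ext x
      simp [Equiv.Perm.mul_def, Equiv.Perm.inv_def]
    rw [← Equiv.sum_comp ((Equiv.inv (Equiv.Perm (Fin n))).trans (Equiv.mulLeft σ))
      (fun τ => (Equiv.Perm.sign τ : ℤ) •
        ((∏ i, A i (σ i)) * ((u (σ.trans τ.symm) : ℕ) : R))), Finset.mul_sum,
      Finset.smul_sum]
    refine Finset.sum_congr rfl fun ρ _ => ?_
    simp only [Equiv.trans_apply, Equiv.inv_apply, Equiv.coe_mulLeft]
    rw [hbij ρ]
    have hsgn : (Equiv.Perm.sign (σ * ρ⁻¹) : ℤ) =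
        (Equiv.Perm.sign σ : ℤ) * (Equiv.Perm.sign ρ : ℤ) := by
      rw [Equiv.Perm.sign_mul, Equiv.Perm.sign_inv]
      push_cast
      ring
    rw [hsgn, mul_smul, mul_smul_comm]
  rw [Finset.sum_congr rfl (fun σ (_ : σ ∈ Finset.univ) => hre σ)]
  -- Step 4 : pull out the determinant
  have hdetA : ∑ σ : Equiv.Perm (Fin n), (Equiv.Perm.sign σ : ℤ) • ∏ i, A i (σ i)
      = A.det := by
    rw [← Matrix.det_transpose A, Matrix.det_apply]
    exact Finset.sum_congr rfl fun σ _ => by rw [Units.smul_def]; rfl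
  have hpull : ∑ σ : Equiv.Perm (Fin n), (Equiv.Perm.sign σ : ℤ) • ((∏ i, A i (σ i)) *
        (∑ ρ : Equiv.Perm (Fin n), (Equiv.Perm.sign ρ : ℤ) • ((u ρ : ℕ) : R)))
      = A.det * (∑ ρ : Equiv.Perm (Fin n), (Equiv.Perm.sign ρ : ℤ) • ((u ρ : ℕ) : R)) := by
    rw [← hdetA, Finset.sum_mul]
    exact Finset.sum_congr rfl fun σ _ => (smul_mul_assoc _ _ _).symm
  rw [hpull]
  have hDr : (∑ ρ : Equiv.Perm (Fin n), (Equiv.Perm.sign ρ : ℤ) • ((u ρ : ℕ) : R))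
      = ((D : ℤ) : R) := by
    rw [hD, Int.cast_sum]
    exact Finset.sum_congr rfl fun ρ _ => by rw [zsmul_eq_mul]; push_cast; ring
  rw [hDr]
  -- Step 5 : integer endgame
  have hPΔ : (P * Δ : ℕ) = ∏ i, (k - m i).factorial := by
    rw [hP, hΔ, ← Finset.prod_mul_distrib]
    exact Finset.prod_congr rfl fun i _ => step_fact m hmono hk i
  have hΔpos : 0 < Δ := by
    rw [hΔ]
    refine Finset.prod_pos fun i _ => Finset.prod_pos fun j hj => ?_
    rw [Finset.mem_Ioi] at hj
    have := hmono hj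
    omega
  have hPpos : 0 < P := by
    rw [hP]
    refine Finset.prod_pos fun i _ => Finset.prod_pos fun j hj => ?_
    rw [Finset.mem_filter, Finset.mem_Ioc] at hj
    omega
  have hDmul : (∑ ρ : Equiv.Perm (Fin n), (Equiv.Perm.sign ρ : ℤ) *
      (if ∀ i, m i + (ρ i : ℕ) ≤ k then
        (Nat.multinomial Finset.univ (fun i => k - m i - (ρ i : ℕ)) : ℤ) else 0))
      * ((∏ i, (k - m i).factorial : ℕ) : ℤ)
      = (-1) ^ n.choose 2 * (N.factorial : ℤ) * ((Δ : ℕ) : ℤ) := D_mul_eq m hmono hk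
  have hDsum : ∑ ρ : Equiv.Perm (Fin n), (Equiv.Perm.sign ρ : ℤ) *
      (if ∀ i, m i + (ρ i : ℕ) ≤ k then
        (Nat.multinomial Finset.univ (fun i => k - m i - (ρ i : ℕ)) : ℤ) else 0) = D := by
    rw [hD]
    refine Finset.sum_congr rfl fun ρ _ => ?_
    rw [hu]
    simp only [apply_ite (fun t : ℕ => (t : ℤ)), Nat.cast_zero, mul_ite, mul_zero]
  rw [hDsum] at hDmul
  have hsq : ((-1:ℤ) ^ n.choose 2) * ((-1) ^ n.choose 2) = 1 := by
    rw [← pow_add]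
    exact Even.neg_one_pow ⟨n.choose 2, rfl⟩
  have hcancel : D * (P : ℤ) = (-1) ^ n.choose 2 * (N.factorial : ℤ) := by
    have hΔz : ((Δ : ℕ) : ℤ) ≠ 0 := by
      exact_mod_cast hΔpos.ne'
    apply mul_right_cancel₀ hΔz
    calc D * (P : ℤ) * ((Δ : ℕ) : ℤ) = D * ((P * Δ : ℕ) : ℤ) := by push_cast; ring
      _ = D * ((∏ i, (k - m i).factorial : ℕ) : ℤ) := by rw [hPΔ]
      _ = (-1) ^ n.choose 2 * (N.factorial : ℤ) * ((Δ : ℕ) : ℤ) := hDmul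
  have hE2 : ((-1:ℤ) ^ n.choose 2 * D) * (P : ℤ) = (N.factorial : ℤ) := by
    rw [mul_assoc, hcancel, ← mul_assoc, hsq, one_mul]
  have hpos : 0 ≤ (-1:ℤ) ^ n.choose 2 * D := by
    by_contra hneg
    push_neg at hneg
    have hPz : (0:ℤ) < P := by exact_mod_cast hPpos
    have hfz : (0:ℤ) < (N.factorial : ℤ) := by exact_mod_cast N.factorial_pos
    nlinarith [hE2]
  obtain ⟨e, he⟩ := Int.eq_ofNat_of_zero_le hpos
  have heP : e * P = N.factorial := by
    have h3 : ((e * P : ℕ) : ℤ) = (N.factorial : ℤ) := by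
      push_cast
      rw [← he]
      exact hE2
    exact_mod_cast h3
  have hdiv : N.factorial / P = e := Nat.div_eq_of_eq_mul_left hPpos heP.symm
  have hDfin : D = (-1) ^ n.choose 2 * ((N.factorial / P : ℕ) : ℤ) := by
    rw [hdiv, ← he, ← mul_assoc, hsq, one_mul]
  rw [hDfin, zsmul_eq_mul]
  push_cast
  ring
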